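/- Let J : ℝ → Matrix (Fin 3) (Fin 3) ℝ be differentiable at 0 with J(0) = 1 (the identity matrix). Define C(t) = (det J(t))⁻¹ • J(t)ᵀ * J(t) and A(t) = det(J(t)) • J(t)⁻¹ * (J(t)⁻¹)ᵀ. Then C'(0) = − trace(J'(0)) • 1 + (J'(0))ᵀ + J'(0) and A'(0) = trace(J'(0)) • 1 − J'(0) − (J'(0))ᵀ; in particular A'(0) = − C'(0). -/

import Mathlib

open Matrix

attribute [local instance] Matrix.normedAddCommGroup Matrix.normedSpace

/-- Derivatives at `t = 0` of the deformation coefficients when `J 0 = 1`: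
`C'(0) = -tr(J'(0)) • 1 + J'(0)ᵀ + J'(0)`, `A'(0) = tr(J'(0)) • 1 - J'(0) - J'(0)ᵀ`,
and in particular `A'(0) = -C'(0)`. -/
theorem deriv_coefficients_at_identity
    (J : ℝ → Matrix (Fin 3) (Fin 3) ℝ) (J' : Matrix (Fin 3) (Fin 3) ℝ)
    (hJ : HasDerivAt J J' 0) (hJ0 : J 0 = 1)
    (C A : ℝ → Matrix (Fin 3) (Fin 3) ℝ)
    (hC : ∀ t, C t = ((J t).det)⁻¹ • ((J t)ᵀ * J t))
    (hA : ∀ t, A t = (J t).det • ((J t)⁻¹ * ((J t)⁻¹)ᵀ)) :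
    HasDerivAt C (-(Matrix.trace J') • (1 : Matrix (Fin 3) (Fin 3) ℝ) + J'ᵀ + J') 0 ∧
    HasDerivAt A ((Matrix.trace J') • (1 : Matrix (Fin 3) (Fin 3) ℝ) - J' - J'ᵀ) 0 ∧
    (Matrix.trace J') • (1 : Matrix (Fin 3) (Fin 3) ℝ) - J' - J'ᵀ
      = -(-(Matrix.trace J') • (1 : Matrix (Fin 3) (Fin 3) ℝ) + J'ᵀ + J') := by
  -- entrywise derivatives of `J`
  have hE : ∀ i j, HasDerivAt (fun t => J t i j) (J' i j) 0 := fun i j =>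
    (hasDerivAt_pi.1 ((hasDerivAt_pi.1 hJ) i)) j
  -- derivative of the determinant
  have hdet : HasDerivAt (fun t => (J t).det) J'.trace 0 := by
    simp only [Matrix.det_fin_three]
    have h := ((((((hE 0 0).mul (hE 1 1)).mul (hE 2 2)).sub
        (((hE 0 0).mul (hE 1 2)).mul (hE 2 1))).sub
        (((hE 0 1).mul (hE 1 0)).mul (hE 2 2))).add
        (((hE 0 1).mul (hE 1 2)).mul (hE 2 0))).add
        (((hE 0 2).mul (hE 1 0)).mul (hE 2 1)) |>.sub
        (((hE 0 2).mul (hE 1 1)).mul (hE 2 0))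
    refine h.congr_deriv ?_
    simp [hJ0, Matrix.trace, Matrix.diag, Fin.sum_univ_three, Matrix.one_apply]
  -- derivative of the inverse of the determinant
  have hdi : HasDerivAt (fun t => ((J t).det)⁻¹) (-J'.trace) 0 := by
    have h := hdet.inv (by simp [hJ0])
    refine h.congr_deriv ?_
    simp [hJ0]
  -- derivative of the adjugate, entrywise
  have hadj : ∀ i j, HasDerivAt (fun t => (J t).adjugate i j)
      (J'.trace * (1 : Matrix (Fin 3) (Fin 3) ℝ) i j - J' i j) 0 := by
    intro i j
    have hform : (fun t => (J t).adjugate i j) = fun t =>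
        (-1 : ℝ) ^ (j + i : ℕ) *
          (J t (j.succAbove 0) (i.succAbove 0) * J t (j.succAbove 1) (i.succAbove 1)
            - J t (j.succAbove 0) (i.succAbove 1) * J t (j.succAbove 1) (i.succAbove 0)) := by
      funext t
      rw [Matrix.adjugate_fin_succ_eq_det_submatrix, Matrix.det_fin_two]
      simp
    rw [hform]
    have h := (((hE (j.succAbove 0) (i.succAbove 0)).mul (hE (j.succAbove 1) (i.succAbove 1))).sub
        ((hE (j.succAbove 0) (i.succAbove 1)).mul (hE (j.succAbove 1) (i.succAbove 0)))).const_mul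
        ((-1 : ℝ) ^ (j + i : ℕ))
    refine h.congr_deriv ?_
    fin_cases i <;> fin_cases j <;>
      simp [hJ0, Matrix.trace, Matrix.diag, Fin.sum_univ_three, Matrix.one_apply, Fin.succAbove,
        Fin.lt_def] <;> ring
  -- derivative of C
  have hCder : HasDerivAt C (-(Matrix.trace J') • (1 : Matrix (Fin 3) (Fin 3) ℝ) + J'ᵀ + J') 0 := by
    have hCfun : C = fun t => ((J t).det)⁻¹ • ((J t)ᵀ * J t) := funext hC
    rw [hCfun]
    apply hasDerivAt_pi.2; intro i; apply hasDerivAt_pi.2; intro j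
    simp only [Matrix.smul_apply, Matrix.mul_apply, Matrix.transpose_apply, smul_eq_mul]
    have h := hdi.mul (HasDerivAt.sum (fun k _ => (hE k i).mul (hE k j))
      (u := (Finset.univ : Finset (Fin 3))))
    refine h.congr_deriv ?_
    fin_cases i <;> fin_cases j <;>
      simp [hJ0, Matrix.trace, Matrix.diag, Fin.sum_univ_three, Matrix.one_apply] <;> ring
  -- rewrite A in terms of the adjugate
  have hA2 : ∀ t, A t = ((J t).det)⁻¹ • ((J t).adjugate * ((J t).adjugate)ᵀ) := by
    intro t
    rw [hA, Matrix.inv_def, Ring.inverse_eq_inv']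
    rw [Matrix.transpose_smul, Matrix.smul_mul, Matrix.mul_smul, smul_smul, smul_smul]
    congr 1
    rcases eq_or_ne (J t).det 0 with h | h
    · simp [h]
    · field_simp
  -- derivative of A
  have hAder : HasDerivAt A ((Matrix.trace J') • (1 : Matrix (Fin 3) (Fin 3) ℝ) - J' - J'ᵀ) 0 := by
    have hAfun : A = fun t => ((J t).det)⁻¹ • ((J t).adjugate * ((J t).adjugate)ᵀ) := funext hA2
    rw [hAfun]
    apply hasDerivAt_pi.2; intro i; apply hasDerivAt_pi.2; intro j
    simp only [Matrix.smul_apply, Matrix.mul_apply, Matrix.transpose_apply, smul_eq_mul]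
    have h := hdi.mul (HasDerivAt.sum (fun k _ => (hadj i k).mul (hadj j k))
      (u := (Finset.univ : Finset (Fin 3))))
    refine h.congr_deriv ?_
    fin_cases i <;> fin_cases j <;>
      simp [hJ0, Matrix.trace, Matrix.diag, Fin.sum_univ_three, Matrix.one_apply] <;> ring
  refine ⟨hCder, hAder, ?_⟩
  ext i j
  simp [Matrix.trace]
  ring
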